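/- (Per-individual decomposition of quantifier-free ontology satisfiability) Let (T, A) be an ontology and C a concept over operators ¬ and constants only (no quantifiers, no binary operators). For each individual a occurring in A, let T^a = T ∪ {⊤ ⊑ D : D(a) ∈ A}. Then (T, A) has a model in which C is nonempty if and only if (i) for every individual a in A the TBox T^a is satisfiable, and (ii) there is a model of T in which C is nonempty. -/

import Mathlib

namespace ALC

/-- A Boolean operator: an arity together with a Boolean function of that arity. -/
structure BoolOp where
  arity : ℕ
  fn : (Fin arity → Bool) → Bool

/-- ALC concepts over atomic concepts `A` and roles `R`, with arbitrary Boolean operators. -/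
inductive Concept (A R : Type) : Type
  | atom : A → Concept A R
  | op : (o : BoolOp) → (Fin o.arity → Concept A R) → Concept A R
  | ex : R → Concept A R → Concept A R
  | all : R → Concept A R → Concept A R

def topOp : BoolOp := ⟨0, fun _ => true⟩
def botOp : BoolOp := ⟨0, fun _ => false⟩
def negOp : BoolOp := ⟨1, fun v => !(v 0)⟩
def andOp : BoolOp := ⟨2, fun v => v 0 && v 1⟩
def orOp : BoolOp := ⟨2, fun v => v 0 || v 1⟩
def xorOp : BoolOp := ⟨2, fun v => xor (v 0) (v 1)⟩

namespace Concept
variable {A R : Type}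

def top : Concept A R := .op topOp Fin.elim0
def bot : Concept A R := .op botOp Fin.elim0
def neg (C : Concept A R) : Concept A R := .op negOp ![C]
def inf (C D : Concept A R) : Concept A R := .op andOp ![C, D]
def sup (C D : Concept A R) : Concept A R := .op orOp ![C, D]

/-- The atomic concept `a` occurs in the concept. -/
def atomOcc (a : A) : Concept A R → Prop
  | .atom b => b = a
  | .op _ cs => ∃ i, (cs i).atomOcc a
  | .ex _ c => c.atomOcc a
  | .all _ c => c.atomOcc a

/-- The role `r` occurs in the concept. -/
def roleOcc (r : R) : Concept A R → Prop
  | .atom _ => False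
  | .op _ cs => ∃ i, (cs i).roleOcc r
  | .ex s c => s = r ∨ c.roleOcc r
  | .all s c => s = r ∨ c.roleOcc r

/-- All Boolean operators of the concept belong to `B`. -/
def opsIn (B : Set BoolOp) : Concept A R → Prop
  | .atom _ => True
  | .op o cs => o ∈ B ∧ ∀ i, (cs i).opsIn B
  | .ex _ c => c.opsIn B
  | .all _ c => c.opsIn B

/-- No universal quantifier occurs. -/
def noAll : Concept A R → Prop
  | .atom _ => True
  | .op _ cs => ∀ i, (cs i).noAll
  | .ex _ c => c.noAll
  | .all _ _ => False

/-- No existential quantifier occurs. -/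
def noEx : Concept A R → Prop
  | .atom _ => True
  | .op _ cs => ∀ i, (cs i).noEx
  | .ex _ _ => False
  | .all _ c => c.noEx

end Concept

/-- An ALC interpretation. -/
structure Interp (A R Ind : Type) where
  Δ : Type
  nonempty : Nonempty Δ
  conc : A → Set Δ
  role : R → Δ → Δ → Prop
  ind : Ind → Δ

open Classical in
/-- The extension of a concept in an interpretation. -/
noncomputable def Interp.sem {A R Ind : Type} (I : Interp A R Ind) : Concept A R → Set I.Δ
  | .atom a => I.conc a
  | .op o cs => {x | o.fn (fun i => decide (x ∈ I.sem (cs i))) = true}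
  | .ex r c => {x | ∃ y, I.role r x y ∧ y ∈ I.sem c}
  | .all r c => {x | ∀ y, I.role r x y → y ∈ I.sem c}

/-- Satisfaction of a GCI `C ⊑ D`. -/
def Interp.satAx {A R Ind : Type} (I : Interp A R Ind) (ax : Concept A R × Concept A R) : Prop :=
  I.sem ax.1 ⊆ I.sem ax.2

/-- Satisfaction of a TBox. -/
def Interp.satT {A R Ind : Type} (I : Interp A R Ind) (T : Set (Concept A R × Concept A R)) : Prop :=
  ∀ ax ∈ T, I.satAx ax

/-- ABox assertions. -/
inductive Assertion (A R Ind : Type)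
  | conc : Concept A R → Ind → Assertion A R Ind
  | role : R → Ind → Ind → Assertion A R Ind

/-- Satisfaction of an ABox assertion. -/
noncomputable def Interp.satA {A R Ind : Type} (I : Interp A R Ind) : Assertion A R Ind → Prop
  | .conc C a => I.ind a ∈ I.sem C
  | .role r a b => I.role r (I.ind a) (I.ind b)

/-- Satisfaction of an ABox. -/
def Interp.satAB {A R Ind : Type} (I : Interp A R Ind) (Ab : Set (Assertion A R Ind)) : Prop :=
  ∀ x ∈ Ab, I.satA x


/-- Quantifier-free concept all of whose operators belong to `Ops`. -/
def Concept.isProp {A R : Type} (Ops : Set BoolOp) : Concept A R → Prop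
  | .atom _ => True
  | .op o cs => o ∈ Ops ∧ ∀ i, (cs i).isProp Ops
  | .ex _ _ => False
  | .all _ _ => False

/-- Propositional (Boolean) evaluation of a quantifier-free concept. -/
def Concept.pEval {A R : Type} (β : A → Bool) : Concept A R → Bool
  | .atom a => β a
  | .op o cs => o.fn (fun i => (cs i).pEval β)
  | .ex _ _ => false
  | .all _ _ => false

/-- The individual `a` is mentioned in the assertion. -/
def Assertion.mentions {A R Ind : Type} (a : Ind) : Assertion A R Ind → Prop
  | .conc _ b => b = a
  | .role _ b c => b = a ∨ c = a

open Classical in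
/-- Semantics of a propositional concept at a point is propositional evaluation. -/
lemma sem_pEval {A R Ind : Type} {Ops : Set BoolOp} (I : Interp A R Ind) (c : Concept A R)
    (h : c.isProp Ops) (x : I.Δ) :
    x ∈ I.sem c ↔ c.pEval (fun a => decide (x ∈ I.conc a)) = true := by
  induction c with
  | atom a => simp [Interp.sem, Concept.pEval]
  | op o cs ih =>
      obtain ⟨-, h2⟩ := h
      simp only [Interp.sem, Concept.pEval, Set.mem_setOf_eq]
      have key : (fun i => decide (x ∈ I.sem (cs i)))
          = (fun i => (cs i).pEval (fun a => decide (x ∈ I.conc a))) := by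
        funext i
        have hiff := ih i (h2 i)
        by_cases hm : x ∈ I.sem (cs i)
        · rw [decide_eq_true hm, hiff.mp hm]
        · rw [decide_eq_false hm]
          exact (Bool.eq_false_iff.mpr (fun hh => hm (hiff.mpr hh))).symm
      rw [key]
  | ex r c ih => exact absurd h (by simp [Concept.isProp])
  | all r c ih => exact absurd h (by simp [Concept.isProp])

lemma mem_sem_top {A R Ind : Type} (I : Interp A R Ind) (x : I.Δ) :
    x ∈ I.sem Concept.top := by
  simp [Interp.sem, Concept.top, topOp]

/-- An interpretation from a family of valuations indexed by `Option Ind`. -/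
abbrev valInterp {A R Ind : Type} (f : Option Ind → A → Bool) : Interp A R Ind :=
  ⟨Option Ind, ⟨none⟩, fun a => {x | f x a = true}, fun _ _ _ => True, fun a => some a⟩

lemma valInterp_sem {A R Ind : Type} {Ops : Set BoolOp} (f : Option Ind → A → Bool)
    (c : Concept A R) (h : c.isProp Ops) (x : Option Ind) :
    x ∈ (valInterp (R := R) f).sem c ↔ c.pEval (f x) = true := by
  classical
  have harg : (fun a => decide (x ∈ (valInterp (R := R) f).conc a)) = f x := by
    funext a
    by_cases hm : x ∈ (valInterp (R := R) f).conc a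
    · exact (decide_eq_true hm).trans (Eq.symm hm)
    · rw [decide_eq_false hm]
      exact (Bool.eq_false_iff.mpr fun hh => hm hh).symm
  exact (sem_pEval (valInterp (R := R) f) c h x).trans (by simp only [valInterp, Set.mem_setOf_eq, Bool.decide_eq_true])

/-- Per-individual decomposition of quantifier-free ontology satisfiability (operators
¬, ⊤, ⊥ only). -/
theorem stmt14 {A R Ind : Type} (T : Set (Concept A R × Concept A R))
    (Ab : Set (Assertion A R Ind)) (C : Concept A R)
    (hT : ∀ ax ∈ T, ax.1.isProp {negOp, topOp, botOp} ∧ ax.2.isProp {negOp, topOp, botOp})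
    (hAb : ∀ (D : Concept A R) (a : Ind),
        Assertion.conc D a ∈ Ab → D.isProp {negOp, topOp, botOp})
    (hC : C.isProp {negOp, topOp, botOp}) :
    (∃ I : Interp A R Ind, I.satT T ∧ I.satAB Ab ∧ I.sem C ≠ ∅) ↔
      ((∀ a : Ind, (∃ x ∈ Ab, x.mentions a) →
          ∃ I : Interp A R Ind,
            I.satT (T ∪ {ax | ∃ D : Concept A R,
              Assertion.conc D a ∈ Ab ∧ ax = (Concept.top, D)}))
        ∧ ∃ I : Interp A R Ind, I.satT T ∧ I.sem C ≠ ∅) := by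
  classical
  set Ops : Set BoolOp := {negOp, topOp, botOp} with hOps
  constructor
  · rintro ⟨I, hIT, hIA, hIC⟩
    constructor
    · intro a _
      -- one-point model with the valuation of `I.ind a`
      refine ⟨valInterp (fun _ b => decide (I.ind a ∈ I.conc b)), ?_⟩
      rintro ax (haxT | ⟨D, hD, rfl⟩) <;> intro x hx
      · rw [valInterp_sem _ _ (hT ax haxT).2 x]
        rw [valInterp_sem _ _ (hT ax haxT).1 x] at hx
        rw [← sem_pEval I ax.1 (hT ax haxT).1 (I.ind a)] at hx
        rw [← sem_pEval I ax.2 (hT ax haxT).2 (I.ind a)]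
        exact hIT ax haxT hx
      · rw [valInterp_sem _ _ (hAb D a hD) x, ← sem_pEval I D (hAb D a hD) (I.ind a)]
        exact hIA _ hD
    · exact ⟨I, hIT, hIC⟩
  · rintro ⟨h1, J, hJT, hJC⟩
    -- witness point for C in J
    obtain ⟨x0, hx0⟩ := Set.nonempty_iff_ne_empty.mpr hJC
    set β0 : A → Bool := fun b => decide (x0 ∈ J.conc b) with hβ0
    have hβ0T : ∀ ax ∈ T, ax.1.pEval β0 = true → ax.2.pEval β0 = true := by
      intro ax haxT h
      rw [← sem_pEval J ax.2 (hT ax haxT).2 x0]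
      exact hJT ax haxT (by rwa [sem_pEval J ax.1 (hT ax haxT).1 x0])
    have hβ0C : C.pEval β0 = true := by
      rw [← sem_pEval J C hC x0]; exact hx0
    -- valuation for each mentioned individual
    have hch : ∀ a : Ind, ∃ β : A → Bool,
        (∀ ax ∈ T, ax.1.pEval β = true → ax.2.pEval β = true) ∧
        ((∃ x ∈ Ab, x.mentions a) →
          ∀ D : Concept A R, Assertion.conc D a ∈ Ab → D.pEval β = true) := by
      intro a
      by_cases hm : ∃ x ∈ Ab, x.mentions a
      · obtain ⟨I, hI⟩ := h1 a hm
        obtain ⟨y⟩ := I.nonempty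
        refine ⟨fun b => decide (y ∈ I.conc b), ?_, ?_⟩
        · intro ax haxT h
          rw [← sem_pEval I ax.2 (hT ax haxT).2 y]
          exact hI ax (Or.inl haxT) (by rwa [sem_pEval I ax.1 (hT ax haxT).1 y])
        · intro _ D hD
          rw [← sem_pEval I D (hAb D a hD) y]
          exact hI (Concept.top, D) (Or.inr ⟨D, hD, rfl⟩) (mem_sem_top I y)
      · exact ⟨β0, hβ0T, fun h => absurd h hm⟩
    choose βf hβfT hβfA using hch
    set f : Option Ind → A → Bool := fun x => x.elim β0 βf with hf
    refine ⟨valInterp f, ?_, ?_, ?_⟩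
    · intro ax haxT x hx
      rw [valInterp_sem _ _ (hT ax haxT).2 x]
      rw [valInterp_sem _ _ (hT ax haxT).1 x] at hx
      cases x with
      | none => exact hβ0T ax haxT hx
      | some a => exact hβfT a ax haxT hx
    · rintro x hx
      cases x with
      | conc D a =>
          show (valInterp f).ind a ∈ (valInterp f).sem D
          rw [show (valInterp (R := R) f).ind a = some a from rfl,
            valInterp_sem _ _ (hAb D a hx) (some a)]
          exact hβfA a ⟨_, hx, rfl⟩ D hx
      | role r a b => exact trivial
    · intro he
      have : (none : Option Ind) ∈ (valInterp (R := R) f).sem C := by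
        rw [valInterp_sem _ _ hC none]; exact hβ0C
      rw [he] at this
      exact this

end ALC
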